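/- Let m, g, λ be real with m ≠ 0, and let q, p, s : ℝ → ℝ be differentiable satisfying q' = (p - 2λs)/m, p' = -mg·e^{2λq} + 2λp(p - 2λs)/m, and s' = p(p-2λs)/m - (p-2λs)²/(2m) - (mg/(2λ))(e^{2λq} - 1) (with λ ≠ 0). Then q'' = λ(q')² - g. -/
import Mathlib


/-- The contact Hamiltonian equations of the parachute system imply `q'' = λ (q')² - g`. -/
theorem parachute_equation_from_contact (m g lam : ℝ) (hm : m ≠ 0) (hlam : lam ≠ 0)
    (q p s : ℝ → ℝ)
    (hq : ∀ t, HasDerivAt q ((p t - 2 * lam * s t) / m) t)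
    (hp : ∀ t, HasDerivAt p
      (-(m * g * Real.exp (2 * lam * q t)) + 2 * lam * p t * (p t - 2 * lam * s t) / m) t)
    (hs : ∀ t, HasDerivAt s
      (p t * (p t - 2 * lam * s t) / m - (p t - 2 * lam * s t) ^ 2 / (2 * m)
        - (m * g / (2 * lam)) * (Real.exp (2 * lam * q t) - 1)) t) :
    ∀ t, deriv (deriv q) t = lam * (deriv q t) ^ 2 - g := by
  have hdq : deriv q = fun t => (p t - 2 * lam * s t) / m := by
    funext t; exact (hq t).deriv
  intro t
  have h2 : HasDerivAt (fun t => (p t - 2 * lam * s t) / m)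
      (((-(m * g * Real.exp (2 * lam * q t)) + 2 * lam * p t * (p t - 2 * lam * s t) / m)
        - 2 * lam * (p t * (p t - 2 * lam * s t) / m - (p t - 2 * lam * s t) ^ 2 / (2 * m)
          - (m * g / (2 * lam)) * (Real.exp (2 * lam * q t) - 1))) / m) t :=
    (((hp t).sub ((hs t).const_mul (2 * lam))).div_const m)
  rw [hdq, h2.deriv]
  simp only
  field_simp
  ring
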